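/- Suppose the value function g is monotone, continuous, and satisfies the extended diminishing returns property. Then for every real λ > 1 and every nonempty S ⊆ {1,…,n} with Σ_{i∈S} c_i ≤ B, u(S) ≤ (λ + d(S)·(1 − 1/λ)^{−1})·max_{i∈S} r_i. -/

import Mathlib

open MeasureTheory ProbabilityTheory Finset

/-- Monotonicity of a value function on multisets of nonnegative reals. -/
def ValMonotone (g : Multiset NNReal → ℝ) : Prop :=
  ∀ ⦃s t : Multiset NNReal⦄, s ≤ t → g s ≤ g t

/-- The diminishing returns property of a value function. -/
def DiminishingReturns (g : Multiset NNReal → ℝ) : Prop :=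
  ∀ ⦃s t : Multiset NNReal⦄, s ≤ t → ∀ z : NNReal, g (z ::ₘ t) - g t ≤ g (z ::ₘ s) - g s

/-- The extended diminishing returns property of a value function. -/
def ExtendedDiminishingReturns (g : Multiset NNReal → ℝ) : Prop :=
  DiminishingReturns g ∧
    ∀ v : ℝ, (∃ s : Multiset NNReal, g s = v) →
      ∃ y : Multiset NNReal, g y = v ∧
        ∀ x : Multiset NNReal, g x ≤ v → ∀ z : NNReal, g (z ::ₘ y) - g y ≤ g (z ::ₘ x) - g x

/-- Continuity of a value function on multisets of each fixed size. -/
def ValContinuous (g : Multiset NNReal → ℝ) : Prop :=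
  ∀ m : ℕ, Continuous fun x : Fin m → NNReal => g (List.ofFn x)

/-- The value function `g` has curvature at most `α`. -/
def CurvatureLE (g : Multiset NNReal → ℝ) (α : ℝ) : Prop :=
  ∀ ⦃s t : Multiset NNReal⦄, s ≤ t → ∀ z : NNReal,
    (1 - α) * (g (z ::ₘ s) - g s) ≤ g (z ::ₘ t) - g t

/-- The stochastic utility of a set of items: `u(S) = E[g({X_i : i ∈ S})]`. -/
noncomputable def utility {Ω : Type} [MeasurableSpace Ω] (μ : Measure Ω) {n : ℕ}
    (g : Multiset NNReal → ℝ) (X : Fin n → Ω → NNReal) (S : Finset (Fin n)) : ℝ :=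
  ∫ ω, g (Multiset.map (fun i => X i ω) S.val) ∂μ

/-- The replication test score of item `i`: expected value of `g` on `k i` i.i.d. copies. -/
noncomputable def testScore {n : ℕ} (g : Multiset NNReal → ℝ)
    (P : Fin n → Measure NNReal) (k : Fin n → ℕ) (i : Fin n) : ℝ :=
  ∫ x : Fin (k i) → NNReal, g (List.ofFn x) ∂(Measure.pi fun _ => P i)

/-- The relative cost `d(S) = ∑_{i ∈ S} 1 / k_i`. -/
noncomputable def relCost {n : ℕ} (k : Fin n → ℕ) (S : Finset (Fin n)) : ℝ :=
  ∑ i ∈ S, ((k i : ℝ))⁻¹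

section helpers

variable {g : Multiset NNReal → ℝ}

private lemma list_cont (hcont : ValContinuous g) {ι : Type} (l : List ι) :
    Continuous fun x : ι → NNReal => g ↑(l.map x) := by
  have h1 : ∀ x : ι → NNReal, l.map x = List.ofFn fun t => x (l.get t) := by
    intro x
    conv_lhs => rw [← List.ofFn_get l, List.map_ofFn]
    rfl
  simp_rw [h1]
  exact (hcont _).comp (continuous_pi fun t => continuous_apply _)

private lemma finset_cont (hcont : ValContinuous g) {ι : Type} (s : Finset ι) :
    Continuous fun x : ι → NNReal => g (Multiset.map x s.val) := by
  have h1 : ∀ x : ι → NNReal, Multiset.map x s.val = ↑(s.toList.map x) := by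
    intro x
    rw [← Finset.coe_toList s, Multiset.map_coe]
  simp_rw [h1]
  exact list_cont hcont _

private lemma cons_cont (hcont : ValContinuous g) (y : Multiset NNReal) :
    Continuous fun z : NNReal => g (z ::ₘ y) := by
  have h1 : ∀ z : NNReal, z ::ₘ y = ↑(List.ofFn (Fin.cons z y.toList.get)) := by
    intro z
    rw [List.ofFn_succ]
    simp only [Fin.cons_zero, Fin.cons_succ, List.ofFn_get]
    rw [← Multiset.cons_coe, Multiset.coe_toList]
  simp_rw [h1]
  refine (hcont _).comp (continuous_pi fun j => ?_)
  induction j using Fin.cases with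
  | zero => simpa using continuous_id'
  | succ i => simpa using continuous_const

private lemma subadd (hdr : DiminishingReturns g) (y t : Multiset NNReal) :
    g (y + t) ≤ g y + ((t.map fun z => g (z ::ₘ y) - g y).sum) := by
  induction t using Multiset.induction_on with
  | empty => simp
  | cons z t ih =>
      have h1 : y + (z ::ₘ t) = z ::ₘ (y + t) := by
        rw [Multiset.add_cons]
      have h2 := hdr (Multiset.le_add_right y t) z
      rw [h1, Multiset.map_cons, Multiset.sum_cons]
      linarith

end helpers


section helpers2

private lemma factor_pi {k : ℕ} (ν : Measure NNReal) [IsProbabilityMeasure ν]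
    (p : Fin k → Prop) [DecidablePred p]
    (F : ({t // p t} → NNReal) → ℝ) (G : ({t // ¬ p t} → NNReal) → ℝ) :
    ∫ x : Fin k → NNReal, F (fun t => x t) * G (fun t => x t)
        ∂(Measure.pi fun _ => ν)
      = (∫ u : {t // p t} → NNReal, F u ∂(Measure.pi fun _ => ν)) *
          ∫ v : {t // ¬ p t} → NNReal, G v ∂(Measure.pi fun _ => ν) := by
  have h := (measurePreserving_piEquivPiSubtypeProd (fun _ : Fin k => ν) p).integral_comp'
    (f := MeasurableEquiv.piEquivPiSubtypeProd (fun _ : Fin k => NNReal) p)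
    (fun z => F z.1 * G z.2)
  rw [← integral_prod_mul F G, ← h]
  rfl

private lemma integral_pi_unique {ιu : Type} [Fintype ιu] [Unique ιu] (ν : Measure NNReal)
    [IsProbabilityMeasure ν] (M : NNReal → ℝ) :
    ∫ u : ιu → NNReal, M (u default) ∂(Measure.pi fun _ => ν) = ∫ z, M z ∂ν := by
  have h := (measurePreserving_funUnique ν ιu).integral_comp'
    (f := MeasurableEquiv.funUnique ιu NNReal) M
  convert h using 3
  rfl

private instance uniqueSubtypeEq {α : Type*} (a : α) : Unique {t // t = a} :=
  ⟨⟨⟨a, rfl⟩⟩, by rintro ⟨t, rfl⟩; rfl⟩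

private lemma step_factor {k : ℕ} (ν : Measure NNReal) [IsProbabilityMeasure ν]
    (g : Multiset NNReal → ℝ) (w : ℝ)
    (jidx : Fin k) (s : Finset (Fin k)) (hjs : jidx ∉ s) (M : NNReal → ℝ) :
    ∫ x : Fin k → NNReal,
        M (x jidx) * (if g (Multiset.map x s.val) ≤ w then (1:ℝ) else 0)
        ∂(Measure.pi fun _ => ν)
      = (∫ z, M z ∂ν) *
          ∫ x : Fin k → NNReal, (if g (Multiset.map x s.val) ≤ w then (1:ℝ) else 0)
            ∂(Measure.pi fun _ => ν) := by
  classical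
  have hsub : ∀ t ∈ s, ¬ t = jidx := fun t ht h => hjs (h ▸ ht)
  have hmap : ∀ x : Fin k → NNReal,
      Multiset.map x s.val
        = Multiset.map (fun t : {t // ¬ t = jidx} => x ↑t)
            (s.subtype (fun t => ¬ t = jidx)).val := by
    intro x
    conv_lhs => rw [← Finset.subtype_map_of_mem hsub]
    rw [Finset.map_val, Multiset.map_map]
    rfl
  have h2' := factor_pi ν (fun t : Fin k => t = jidx) (fun _ => (1:ℝ))
    (fun v : {t : Fin k // ¬ t = jidx} → NNReal =>
      if g (Multiset.map (fun t => v t) (s.subtype (fun t => ¬ t = jidx)).val) ≤ w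
      then (1:ℝ) else 0)
  simp only [one_mul, integral_const, measure_univ, probReal_univ, ENNReal.toReal_one, smul_eq_mul] at h2'
  have hdef : ((default : {t : Fin k // t = jidx}) : Fin k) = jidx := rfl
  have hF := factor_pi ν (fun t : Fin k => t = jidx)
    (fun u : {t : Fin k // t = jidx} → NNReal => M (u default))
    (fun v : {t : Fin k // ¬ t = jidx} → NNReal =>
      if g (Multiset.map (fun t => v t) (s.subtype (fun t => ¬ t = jidx)).val) ≤ w
      then (1:ℝ) else 0)
  simp only [hdef] at hF
  simp_rw [← hmap] at hF h2'
  rw [hF, ← h2']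
  congr 1
  exact @integral_pi_unique {t : Fin k // t = jidx} (Subtype.fintype _) _ ν _ M


private lemma ind_int {X : Type*} [MeasurableSpace X] (π : Measure X) [IsProbabilityMeasure π]
    (G : X → ℝ) (hGm : Measurable G) (A : ℝ) :
    Integrable (fun x => if G x ≤ A then (1:ℝ) else 0) π := by
  refine (integrable_const (1:ℝ)).mono ?_ (ae_of_all _ fun x => ?_)
  · exact (Measurable.ite (measurableSet_le hGm measurable_const)
      measurable_const measurable_const).aestronglyMeasurable
  · by_cases h : G x ≤ A <;> simp [h]

private lemma markov_ind {X : Type*} [MeasurableSpace X] (π : Measure X)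
    [IsProbabilityMeasure π] (G : X → ℝ) (hGm : Measurable G) (hGnn : ∀ x, 0 ≤ G x)
    (hGint : Integrable G π) (A lam : ℝ) (hlam : 1 < lam) (hA : 0 ≤ A)
    (hGA : ∫ x, G x ∂π ≤ A / lam) :
    1 - 1/lam ≤ ∫ x, (if G x ≤ A then (1:ℝ) else 0) ∂π := by
  have hlam0 : 0 < lam := lt_trans one_pos hlam
  rcases eq_or_lt_of_le hA with hA0 | hApos
  · have h1 : ∫ x, G x ∂π = 0 := by
      refine le_antisymm ?_ (integral_nonneg hGnn)
      rw [← hA0] at hGA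
      simpa using hGA
    have hae : G =ᵐ[π] fun _ => 0 := (integral_eq_zero_iff_of_nonneg hGnn hGint).mp h1
    have hind : (fun x => if G x ≤ A then (1:ℝ) else 0) =ᵐ[π] fun _ => 1 := by
      filter_upwards [hae] with x hx
      simp [hx, ← hA0]
    rw [integral_congr_ae hind, integral_const]
    have : (0:ℝ) < 1/lam := by positivity
    simp
    linarith
  · have hpoint : ∀ x, 1 - (if G x ≤ A then (1:ℝ) else 0) ≤ G x / A := by
      intro x
      by_cases h : G x ≤ A
      · simp [h]
        exact div_nonneg (hGnn x) (le_of_lt hApos)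
      · simp [h]
        rw [le_div_iff₀ hApos, one_mul]
        linarith [not_le.mp h]
    have hint1 : Integrable (fun x => 1 - (if G x ≤ A then (1:ℝ) else 0)) π :=
      (integrable_const (1:ℝ)).sub (ind_int π G hGm A)
    have := integral_mono hint1 (hGint.div_const A) hpoint
    rw [integral_sub (integrable_const 1) (ind_int π G hGm A), integral_const,
      integral_div] at this
    simp only [measure_univ, probReal_univ, ENNReal.toReal_one, smul_eq_mul, mul_one, one_smul] at this
    have h2 : (∫ x, G x ∂π) / A ≤ 1 / lam := by
      rw [div_le_div_iff₀ hApos hlam0]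
      calc (∫ x, G x ∂π) * lam ≤ (A / lam) * lam := by
            exact mul_le_mul_of_nonneg_right hGA (le_of_lt hlam0)
        _ = 1 * A := by field_simp
    linarith


end helpers2
private lemma item_bound {g : Multiset NNReal → ℝ}
    (hg0 : g 0 = 0) (hgnn : ∀ s, 0 ≤ g s) (hmono : ValMonotone g) (hcont : ValContinuous g)
    (hdr : DiminishingReturns g)
    (ν : Measure NNReal) [IsProbabilityMeasure ν] (k : ℕ)
    (hIntk : Integrable (fun x : Fin k → NNReal => g ↑(List.ofFn x))
      (Measure.pi fun _ : Fin k => ν))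
    (y : Multiset NNReal) (w ε : ℝ)
    (hanchor : ∀ x : Multiset NNReal, g x ≤ w → ∀ z, g (z ::ₘ y) - g y ≤ g (z ::ₘ x) - g x)
    (hpi : ∀ j : ℕ, j < k →
      1 - ε ≤ ∫ x : Fin k → NNReal,
        (if g (Multiset.map x ((Finset.univ.filter fun t : Fin k => (t : ℕ) < j)).val) ≤ w
         then (1:ℝ) else 0) ∂(Measure.pi fun _ : Fin k => ν)) :
    (1 - ε) * k * (∫ z, (g (z ::ₘ y) - g y) ∂ν)
      ≤ ∫ x : Fin k → NNReal, g ↑(List.ofFn x) ∂(Measure.pi fun _ : Fin k => ν) := by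
  classical
  set π := (Measure.pi fun _ : Fin k => ν) with hpidef
  set M : NNReal → ℝ := fun z => g (z ::ₘ y) - g y with hMdef
  have hMcont : Continuous M := (cons_cont hcont y).sub continuous_const
  have hM0 : ∀ z, 0 ≤ M z := fun z => by
    have := hmono (Multiset.le_cons_self y z)
    simp only [hMdef]
    linarith
  have hMle : ∀ z, M z ≤ g {z} := fun z => by
    have h := hdr (Multiset.zero_le y) z
    rw [Multiset.cons_zero, hg0] at h
    simp only [hMdef]
    linarith
  set Pre : ℕ → Finset (Fin k) := fun j => Finset.univ.filter fun t : Fin k => (t:ℕ) < j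
    with hPre
  have hprecont : ∀ s : Finset (Fin k),
      Continuous fun x : Fin k → NNReal => g (Multiset.map x s.val) :=
    fun s => finset_cont hcont s
  have hfull : ∀ x : Fin k → NNReal,
      (↑(List.ofFn x) : Multiset NNReal) = Multiset.map x (univ : Finset (Fin k)).val :=
    fun x => (Fin.univ_val_map x).symm
  have hint : ∀ s : Finset (Fin k), Integrable (fun x => g (Multiset.map x s.val)) π := by
    intro s
    refine hIntk.mono (hprecont s).measurable.aestronglyMeasurable (ae_of_all _ fun x => ?_)
    rw [Real.norm_eq_abs, Real.norm_eq_abs, abs_of_nonneg (hgnn _), abs_of_nonneg (hgnn _),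
      hfull x]
    exact hmono (Multiset.map_le_map (Finset.val_le_iff.mpr (Finset.subset_univ s)))
  have hm0 : 0 ≤ ∫ z, M z ∂ν := integral_nonneg hM0
  have hkey : ∀ j, j ≤ k → (1 - ε) * j * (∫ z, M z ∂ν)
      ≤ ∫ x, g (Multiset.map x (Pre j).val) ∂π := by
    intro j
    induction j with
    | zero =>
        intro _
        have h0 : Pre 0 = (∅ : Finset (Fin k)) := by
          ext t; simp [hPre]
        simp [h0, hg0]
    | succ j ih =>
        intro hjk
        have hjk' : j ≤ k := Nat.le_of_succ_le hjk
        have hjlt : j < k := hjk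
        set jidx : Fin k := ⟨j, hjlt⟩ with hjidx
        have hnotmem : jidx ∉ Pre j := by simp [hPre, hjidx]
        have hins : Pre (j+1) = insert jidx (Pre j) := by
          ext t
          simp only [hPre, Finset.mem_filter, Finset.mem_univ, true_and, Finset.mem_insert,
            Fin.ext_iff, hjidx]
          omega
        have hsplit : ∀ x : Fin k → NNReal,
            Multiset.map x (Pre (j+1)).val = x jidx ::ₘ Multiset.map x (Pre j).val := by
          intro x
          rw [hins, Finset.insert_val_of_notMem hnotmem, Multiset.map_cons]
        set φ : (Fin k → NNReal) → ℝ := fun x =>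
          M (x jidx) * (if g (Multiset.map x (Pre j).val) ≤ w then (1:ℝ) else 0) with hphi
        have hφmeas : Measurable φ := by
          refine ((hMcont.measurable).comp (measurable_pi_apply jidx)).mul ?_
          exact Measurable.ite (measurableSet_le (hprecont (Pre j)).measurable
            measurable_const) measurable_const measurable_const
        have hφint : Integrable φ π := by
          refine hIntk.mono hφmeas.aestronglyMeasurable (ae_of_all _ fun x => ?_)
          rw [Real.norm_eq_abs, Real.norm_eq_abs, abs_of_nonneg (hgnn _)]
          have h1 : |φ x| ≤ M (x jidx) := by
            rw [hphi]
            by_cases hc : g (Multiset.map x (Pre j).val) ≤ w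
            · simp [hc, abs_of_nonneg (hM0 (x jidx))]
            · simp [hc, hM0 (x jidx)]
          have h2 : M (x jidx) ≤ g {x jidx} := hMle _
          have h3 : g {x jidx} ≤ g ↑(List.ofFn x) := by
            rw [hfull x]
            have he : ({x jidx} : Multiset NNReal)
                = Multiset.map x ({jidx} : Finset (Fin k)).val := by simp
            rw [he]
            exact hmono (Multiset.map_le_map
              (Finset.val_le_iff.mpr (Finset.subset_univ _)))
          linarith
        have hpoint : ∀ x, g (Multiset.map x (Pre j).val) + φ x
            ≤ g (Multiset.map x (Pre (j+1)).val) := by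
          intro x
          rw [hsplit x]
          by_cases hc : g (Multiset.map x (Pre j).val) ≤ w
          · have h := hanchor _ hc (x jidx)
            simp only [hphi, hc, if_pos, mul_one]
            simp only [hMdef] at h ⊢
            linarith
          · have h := hmono (Multiset.le_cons_self (Multiset.map x (Pre j).val) (x jidx))
            simp only [hphi, hc, if_neg, mul_zero, not_false_iff]
            linarith
        have hstep : ∫ x, g (Multiset.map x (Pre j).val) ∂π + ∫ x, φ x ∂π
            ≤ ∫ x, g (Multiset.map x (Pre (j+1)).val) ∂π := by
          rw [← integral_add (hint (Pre j)) hφint]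
          exact integral_mono ((hint (Pre j)).add hφint) (hint (Pre (j+1))) hpoint
        have hfact : ∫ x, φ x ∂π = (∫ z, M z ∂ν) *
            ∫ x, (if g (Multiset.map x (Pre j).val) ≤ w then (1:ℝ) else 0) ∂π :=
          step_factor ν g w jidx (Pre j) hnotmem M
        have hπj := hpi j hjlt
        have hphilb : (1 - ε) * (∫ z, M z ∂ν) ≤ ∫ x, φ x ∂π := by
          rw [hfact, mul_comm]
          exact mul_le_mul_of_nonneg_left hπj hm0
        have hih := ih hjk'
        push_cast
        push_cast at hih
        nlinarith [hstep, hphilb, hih]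
  have hko := hkey k (le_refl k)
  have huniv : Pre k = (univ : Finset (Fin k)) := by
    ext t; simp [hPre, t.isLt]
  rw [huniv] at hko
  calc (1 - ε) * k * (∫ z, M z ∂ν) ≤ ∫ x, g (Multiset.map x (univ : Finset (Fin k)).val) ∂π :=
        hko
    _ = ∫ x : Fin k → NNReal, g ↑(List.ofFn x) ∂π := by
        congr 1
        funext x
        rw [hfull x]

private lemma main_step {Ω : Type} [MeasurableSpace Ω] (μ : Measure Ω) [IsProbabilityMeasure μ]
    {n : ℕ} (k : Fin n → ℕ) (X : Fin n → Ω → NNReal) (hXmeas : ∀ i, Measurable (X i))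
    (P : Fin n → Measure NNReal) [∀ i, IsProbabilityMeasure (P i)]
    (hlaw : ∀ i, μ.map (X i) = P i)
    {g : Multiset NNReal → ℝ} (hg0 : g 0 = 0) (hgnn : ∀ s, 0 ≤ g s)
    (hmono : ValMonotone g) (hcont : ValContinuous g) (hdr : DiminishingReturns g)
    (hIntu : ∀ S : Finset (Fin n),
      Integrable (fun ω => g (Multiset.map (fun i => X i ω) S.val)) μ)
    (hIntr : ∀ i, Integrable (fun x : Fin (k i) → NNReal => g (List.ofFn x))
      (Measure.pi fun _ => P i))
    (S : Finset (Fin n)) (hS : S.Nonempty) (hk1 : ∀ i, 1 ≤ k i)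
    (y : Multiset NNReal) (w ε : ℝ) (hε1 : ε < 1)
    (hanchor : ∀ x : Multiset NNReal, g x ≤ w → ∀ z, g (z ::ₘ y) - g y ≤ g (z ::ₘ x) - g x)
    (hpi : ∀ i ∈ S, ∀ j : ℕ, j < k i →
      1 - ε ≤ ∫ x : Fin (k i) → NNReal,
        (if g (Multiset.map x ((Finset.univ.filter fun t : Fin (k i) => (t : ℕ) < j)).val) ≤ w
         then (1:ℝ) else 0) ∂(Measure.pi fun _ => P i)) :
    utility μ g X S
      ≤ g y + (1-ε)⁻¹ * ((∑ i ∈ S, ((k i : ℝ))⁻¹) * S.sup' hS (testScore g P k)) := by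
  classical
  set r := S.sup' hS (testScore g P k) with hrdef
  have hts_nn : ∀ i, 0 ≤ testScore g P k i := fun i => integral_nonneg fun x => hgnn _
  obtain ⟨i₀, hi₀⟩ := hS
  have hr0 : 0 ≤ r := le_trans (hts_nn i₀) (Finset.le_sup' _ hi₀)
  have hεpos : (0:ℝ) < 1 - ε := by linarith
  set M : NNReal → ℝ := fun z => g (z ::ₘ y) - g y with hMdef
  have hMcont : Continuous M := (cons_cont hcont y).sub continuous_const
  have hM0 : ∀ z, 0 ≤ M z := fun z => by
    have := hmono (Multiset.le_cons_self y z); simp only [hMdef]; linarith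
  have hMleg : ∀ z, M z ≤ g {z} := fun z => by
    have h := hdr (Multiset.zero_le y) z
    rw [Multiset.cons_zero, hg0] at h
    simp only [hMdef]; linarith
  have hint1 : ∀ i, Integrable (fun ω => g {X i ω}) μ := by
    intro i
    have h := hIntu {i}
    simpa using h
  have hconsint : ∀ i, Integrable (fun ω => g (X i ω ::ₘ y)) μ := by
    intro i
    refine ((integrable_const (g y)).add (hint1 i)).mono
      ((cons_cont hcont y).measurable.comp (hXmeas i)).aestronglyMeasurable
      (ae_of_all _ fun ω => ?_)
    rw [Real.norm_eq_abs, Real.norm_eq_abs, abs_of_nonneg (hgnn _)]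
    have h1 : g (X i ω ::ₘ y) ≤ g y + g {X i ω} := by
      have := hMleg (X i ω); simp only [hMdef] at this; linarith
    have h2 : 0 ≤ g y + g {X i ω} := by
      have := hgnn y; have := hgnn ({X i ω} : Multiset NNReal); linarith
    simp only [Pi.add_apply]
    rw [abs_of_nonneg h2]; exact h1
  have hpoint : ∀ ω, g (Multiset.map (fun i => X i ω) S.val)
      ≤ g y + ∑ i ∈ S, (g (X i ω ::ₘ y) - g y) := by
    intro ω
    have h1 := hmono (Multiset.le_add_left (Multiset.map (fun i => X i ω) S.val) y)
    have h2 := subadd hdr y (Multiset.map (fun i => X i ω) S.val)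
    rw [Multiset.map_map] at h2
    have h3 : ((Multiset.map ((fun z => g (z ::ₘ y) - g y) ∘ fun i => X i ω) S.val)).sum
        = ∑ i ∈ S, (g (X i ω ::ₘ y) - g y) := rfl
    rw [h3] at h2
    linarith
  have hRHSint : Integrable (fun ω => g y + ∑ i ∈ S, (g (X i ω ::ₘ y) - g y)) μ :=
    (integrable_const _).add (integrable_finset_sum S fun i _ =>
      (hconsint i).sub (integrable_const _))
  have h4 : utility μ g X S ≤ ∫ ω, (g y + ∑ i ∈ S, (g (X i ω ::ₘ y) - g y)) ∂μ :=
    integral_mono (hIntu S) hRHSint hpoint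
  have hsubint : ∀ i : Fin n, Integrable (fun ω => g (X i ω ::ₘ y) - g y) μ :=
    fun i => (hconsint i).sub (integrable_const _)
  have hsumint : Integrable (fun ω => ∑ i ∈ S, (g (X i ω ::ₘ y) - g y)) μ :=
    integrable_finset_sum S fun i _ => hsubint i
  have h5 : ∫ ω, (g y + ∑ i ∈ S, (g (X i ω ::ₘ y) - g y)) ∂μ
      = g y + ∑ i ∈ S, (∫ z, M z ∂(P i)) := by
    rw [integral_add (integrable_const _) hsumint, integral_const]
    simp only [measure_univ, probReal_univ, ENNReal.toReal_one, one_smul]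
    congr 1
    rw [integral_finset_sum S fun i _ => hsubint i]
    refine Finset.sum_congr rfl fun i _ => ?_
    have hPcons : Integrable (fun z => g (z ::ₘ y)) (P i) := by
      rw [← hlaw i]
      refine (integrable_map_measure
        (cons_cont hcont y).measurable.aestronglyMeasurable
        (hXmeas i).aemeasurable).mpr ?_
      exact hconsint i
    have h6 : ∫ z, M z ∂(P i) = ∫ z, (g (z ::ₘ y) - g y) ∂(P i) := rfl
    rw [integral_sub (hconsint i) (integrable_const _), h6,
      integral_sub hPcons (integrable_const _), integral_const, integral_const]
    simp only [measure_univ, probReal_univ, ENNReal.toReal_one, one_smul]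
    congr 1
    rw [← hlaw i, integral_map (hXmeas i).aemeasurable
      (cons_cont hcont y).measurable.aestronglyMeasurable]
  have hmi : ∀ i ∈ S, ∫ z, M z ∂(P i) ≤ (1-ε)⁻¹ * (((k i : ℝ))⁻¹ * r) := by
    intro i hi
    have hib := item_bound hg0 hgnn hmono hcont hdr (P i) (k i) (hIntr i) y w ε hanchor
      (hpi i hi)
    have hkpos : (0:ℝ) < (k i : ℝ) := by exact_mod_cast hk1 i
    have hrle : testScore g P k i ≤ r := Finset.le_sup' _ hi
    have hts : (1 - ε) * (k i) * (∫ z, M z ∂(P i)) ≤ r := le_trans hib hrle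
    have h7 : (1-ε)⁻¹ * (((k i : ℝ))⁻¹ * r) = r / ((1-ε) * (k i : ℝ)) := by
      field_simp
    rw [h7, le_div_iff₀ (by positivity)]
    nlinarith [hts]
  calc utility μ g X S ≤ g y + ∑ i ∈ S, (∫ z, M z ∂(P i)) := by rw [← h5]; exact h4
    _ ≤ g y + ∑ i ∈ S, (1-ε)⁻¹ * (((k i : ℝ))⁻¹ * r) := by
        have := Finset.sum_le_sum hmi
        linarith
    _ = g y + (1-ε)⁻¹ * ((∑ i ∈ S, ((k i : ℝ))⁻¹) * r) := by
        congr 1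
        rw [Finset.sum_mul, Finset.mul_sum]

private lemma card_le_bound {g : Multiset NNReal → ℝ} (hmono : ValMonotone g) {A : ℝ} {m : ℕ}
    (h : ∀ x : Fin m → NNReal, g ↑(List.ofFn x) ≤ A) :
    ∀ t : Multiset NNReal, Multiset.card t ≤ m → g t ≤ A := by
  intro t hcard
  set t' := t + Multiset.replicate (m - Multiset.card t) 0 with ht'
  have hc : Multiset.card t' = m := by
    simp only [ht', Multiset.card_add, Multiset.card_replicate]
    omega
  have h1 : g t ≤ g t' := hmono (Multiset.le_add_right _ _)
  set l := t'.toList with hl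
  have hlen : l.length = m := by rw [hl, Multiset.length_toList, hc]
  have h3 : List.ofFn (fun i : Fin m => l.get (Fin.cast hlen.symm i)) = l := by
    apply List.ext_get
    · simp [hlen]
    · intro nn h1' h2'
      simp [List.get_ofFn]
  have h2 : t' = ↑(List.ofFn fun i : Fin m => l.get (Fin.cast hlen.symm i)) := by
    rw [h3, hl, Multiset.coe_toList]
  calc g t ≤ g t' := h1
    _ ≤ A := by rw [h2]; exact h _

private lemma exists_anchor_level {g : Multiset NNReal → ℝ} (hcont : ValContinuous g) {m : ℕ}
    {a b : Fin m → NNReal} {A : ℝ}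
    (ha : g ↑(List.ofFn a) ≤ A) (hb : A < g ↑(List.ofFn b)) :
    ∃ ymul : Multiset NNReal, g ymul = A := by
  set F : NNReal → ℝ := fun t => g ↑(List.ofFn fun i => (1 - t) * a i + t * b i) with hF
  have hFc : Continuous F := by
    refine (hcont m).comp (continuous_pi fun i => ?_)
    exact ((continuous_const.sub continuous_id).mul continuous_const).add
      (continuous_id.mul continuous_const)
  have hF0 : F 0 = g ↑(List.ofFn a) := by simp [hF]
  have hF1 : F 1 = g ↑(List.ofFn b) := by simp [hF]
  have hsub := intermediate_value_Icc (zero_le_one (α := NNReal)) hFc.continuousOn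
  have hmem : A ∈ Set.Icc (F 0) (F 1) := by rw [hF0, hF1]; exact ⟨ha, le_of_lt hb⟩
  obtain ⟨t, _, ht⟩ := hsub hmem
  exact ⟨_, ht⟩

private lemma pre_integral_le {g : Multiset NNReal → ℝ} (hgnn : ∀ s, 0 ≤ g s)
    (hmono : ValMonotone g) (hcont : ValContinuous g)
    (ν : Measure NNReal) [IsProbabilityMeasure ν] (kk : ℕ)
    (hIntk : Integrable (fun x : Fin kk → NNReal => g ↑(List.ofFn x))
      (Measure.pi fun _ : Fin kk => ν))
    (s : Finset (Fin kk)) :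
    Integrable (fun x : Fin kk → NNReal => g (Multiset.map x s.val))
        (Measure.pi fun _ : Fin kk => ν)
      ∧ ∫ x : Fin kk → NNReal, g (Multiset.map x s.val) ∂(Measure.pi fun _ : Fin kk => ν)
        ≤ ∫ x : Fin kk → NNReal, g ↑(List.ofFn x) ∂(Measure.pi fun _ : Fin kk => ν) := by
  have hfull : ∀ x : Fin kk → NNReal,
      (↑(List.ofFn x) : Multiset NNReal) = Multiset.map x (univ : Finset (Fin kk)).val :=
    fun x => (Fin.univ_val_map x).symm
  have hle : ∀ x : Fin kk → NNReal, g (Multiset.map x s.val) ≤ g ↑(List.ofFn x) := by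
    intro x
    rw [hfull x]
    exact hmono (Multiset.map_le_map (Finset.val_le_iff.mpr (Finset.subset_univ s)))
  have hint : Integrable (fun x : Fin kk → NNReal => g (Multiset.map x s.val))
      (Measure.pi fun _ : Fin kk => ν) := by
    refine hIntk.mono (finset_cont hcont s).measurable.aestronglyMeasurable
      (ae_of_all _ fun x => ?_)
    rw [Real.norm_eq_abs, Real.norm_eq_abs, abs_of_nonneg (hgnn _), abs_of_nonneg (hgnn _)]
    exact hle x
  exact ⟨hint, integral_mono hint hIntk hle⟩

/-- for every `λ > 1`, the utility of a feasible set is at most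
`(λ + d(S)·(1 − 1/λ)⁻¹)` times the maximum replication test score. -/
theorem stmt10 {Ω : Type} [MeasurableSpace Ω] (μ : Measure Ω) [IsProbabilityMeasure μ]
    {n : ℕ} (hn : 1 ≤ n)
    (c : Fin n → ℝ) (B : ℝ) (hB : 0 < B) (hc : ∀ i, 0 < c i) (hcB : ∀ i, c i ≤ B)
    (k : Fin n → ℕ) (hk : ∀ i, k i = ⌊B / c i⌋₊)
    (X : Fin n → Ω → NNReal) (hXmeas : ∀ i, Measurable (X i))
    (P : Fin n → Measure NNReal) [∀ i, IsProbabilityMeasure (P i)]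
    (hlaw : ∀ i, μ.map (X i) = P i)
    (hindep : iIndepFun X μ)
    (g : Multiset NNReal → ℝ) (hg0 : g 0 = 0) (hgnn : ∀ s, 0 ≤ g s)
    (hmono : ValMonotone g) (hcont : ValContinuous g)
    (hedr : ExtendedDiminishingReturns g)
    (hIntu : ∀ S : Finset (Fin n),
      Integrable (fun ω => g (Multiset.map (fun i => X i ω) S.val)) μ)
    (hIntr : ∀ i, Integrable (fun x : Fin (k i) → NNReal => g (List.ofFn x))
      (Measure.pi fun _ => P i)) :
    ∀ lam : ℝ, 1 < lam →
      ∀ S : Finset (Fin n), ∀ hS : S.Nonempty, ∑ i ∈ S, c i ≤ B →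
        utility μ g X S ≤
          (lam + relCost k S * (1 - 1 / lam)⁻¹) * S.sup' hS (testScore g P k) := by
  intro lam hlam S hS hbud
  classical
  rw [show relCost k S = ∑ i ∈ S, ((k i : ℝ))⁻¹ from rfl]
  have hlam0 : (0:ℝ) < lam := lt_trans one_pos hlam
  have hinvlt : 1/lam < 1 := by rw [div_lt_one hlam0]; exact hlam
  have hinv0 : (0:ℝ) < 1/lam := by positivity
  have hk1 : ∀ i, 1 ≤ k i := by
    intro i
    rw [hk i]
    have h1 : (1:ℝ) ≤ B / c i := (one_le_div (hc i)).mpr (hcB i)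
    exact Nat.le_floor (by exact_mod_cast h1)
  set r := S.sup' hS (testScore g P k) with hrdef
  have hts_nn : ∀ i, 0 ≤ testScore g P k i := fun i => integral_nonneg fun x => hgnn _
  have hr0 : 0 ≤ r := le_trans (hts_nn hS.choose) (Finset.le_sup' _ hS.choose_spec)
  set D := (∑ i ∈ S, ((k i : ℝ))⁻¹) with hD
  have hD0 : 0 ≤ D := Finset.sum_nonneg fun i _ => by positivity
  have hco : (0:ℝ) < 1 - 1/lam := by linarith
  have hco1 : (1:ℝ) ≤ (1 - 1/lam)⁻¹ := by
    rw [le_inv_comm₀ one_pos hco]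
    linarith
  set A := lam * r with hA
  have hA0 : 0 ≤ A := mul_nonneg (le_of_lt hlam0) hr0
  have hRHS : (lam + D * (1 - 1/lam)⁻¹) * r = A + (1 - 1/lam)⁻¹ * (D * r) := by
    rw [hA]; ring
  rw [hRHS]
  by_cases hall : ∀ x : Multiset NNReal, g x ≤ A
  · have h1 : utility μ g X S ≤ A := by
      have h2 := integral_mono (hIntu S) (integrable_const A) fun ω => hall _
      simpa [utility] using h2
    have h3 : (0:ℝ) ≤ (1 - 1/lam)⁻¹ * (D * r) := by positivity
    linarith
  push_neg at hall
  obtain ⟨s₀, hs₀⟩ := hall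
  by_cases hrange : ∃ ym : Multiset NNReal, g ym = A
  · obtain ⟨y, hyA, hymin⟩ := hedr.2 A hrange
    have hpi : ∀ i ∈ S, ∀ j : ℕ, j < k i →
        1 - 1/lam ≤ ∫ x : Fin (k i) → NNReal,
          (if g (Multiset.map x ((Finset.univ.filter fun t : Fin (k i) => (t : ℕ) < j)).val) ≤ A
           then (1:ℝ) else 0) ∂(Measure.pi fun _ => P i) := by
      intro i hi j _
      set s := Finset.univ.filter (fun t : Fin (k i) => (t:ℕ) < j) with hs
      obtain ⟨hint, hIle⟩ := pre_integral_le hgnn hmono hcont (P i) (k i) (hIntr i) s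
      refine markov_ind _ _ (finset_cont hcont s).measurable (fun x => hgnn _) hint A lam
        hlam hA0 ?_
      have hAr : A / lam = r := by rw [hA]; field_simp
      rw [hAr]
      exact le_trans hIle (Finset.le_sup' (testScore g P k) hi)
    have hms := main_step μ k X hXmeas P hlaw hg0 hgnn hmono hcont hedr.1 hIntu hIntr S hS
      hk1 y A (1/lam) (by linarith) hymin hpi
    rw [hyA] at hms
    exact hms
  · have hApos : 0 < A := by
      rcases eq_or_lt_of_le hA0 with h | h
      · exact absurd ⟨0, by rw [hg0, h]⟩ hrange
      · exact h
    have hrpos : 0 < r := by nlinarith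
    have hsize : ∀ m : ℕ, (∀ x : Fin m → NNReal, g ↑(List.ofFn x) ≤ A)
        ∨ (∀ x : Fin m → NNReal, A < g ↑(List.ofFn x)) := by
      intro m
      by_contra hcon
      push_neg at hcon
      obtain ⟨⟨b, hb⟩, a, ha⟩ := hcon
      exact hrange (exists_anchor_level hcont ha hb)
    have hkiLE : ∀ i ∈ S, ∀ x : Fin (k i) → NNReal, g ↑(List.ofFn x) ≤ A := by
      intro i hi
      rcases hsize (k i) with h | h
      · exact h
      · exfalso
        have h1 : A ≤ testScore g P k i := by
          have h2 := integral_mono (integrable_const A) (hIntr i) fun x => le_of_lt (h x)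
          simpa [testScore] using h2
        have h2 : testScore g P k i ≤ r := Finset.le_sup' _ hi
        nlinarith
    have hpreLE : ∀ i ∈ S, ∀ t : Multiset NNReal, Multiset.card t ≤ k i → g t ≤ A :=
      fun i hi => card_le_bound hmono (hkiLE i hi)
    have hcardpre : ∀ i : Fin n, ∀ j : ℕ, ∀ x : Fin (k i) → NNReal,
        Multiset.card (Multiset.map x
          ((Finset.univ.filter fun t : Fin (k i) => (t : ℕ) < j)).val) ≤ k i := by
      intro i j x
      rw [Multiset.card_map]
      calc ((Finset.univ.filter fun t : Fin (k i) => (t : ℕ) < j)).val.card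
          = ((Finset.univ.filter fun t : Fin (k i) => (t : ℕ) < j)).card := rfl
        _ ≤ (univ : Finset (Fin (k i))).card := Finset.card_le_card (Finset.filter_subset _ _)
        _ = k i := by simp
    set Sv : Set ℝ := {v | (∃ x : Multiset NNReal, g x = v) ∧ v ≤ A} with hSv
    have hSne : Sv.Nonempty := ⟨0, ⟨0, hg0⟩, hA0⟩
    have hSbdd : BddAbove Sv := ⟨A, fun v hv => hv.2⟩
    set V := sSup Sv with hV
    have hVA : V ≤ A := csSup_le hSne fun v hv => hv.2
    have hleV : ∀ x : Multiset NNReal, g x ≤ A → g x ≤ V :=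
      fun x hx => le_csSup hSbdd ⟨⟨x, rfl⟩, hx⟩
    by_cases hVatt : ∃ x : Multiset NNReal, g x = V
    · obtain ⟨y, hyV, hymin⟩ := hedr.2 V hVatt
      have hpi : ∀ i ∈ S, ∀ j : ℕ, j < k i →
          1 - 1/lam ≤ ∫ x : Fin (k i) → NNReal,
            (if g (Multiset.map x
                ((Finset.univ.filter fun t : Fin (k i) => (t : ℕ) < j)).val) ≤ V
             then (1:ℝ) else 0) ∂(Measure.pi fun _ => P i) := by
        intro i hi j _
        have hone : ∀ x : Fin (k i) → NNReal,
            (if g (Multiset.map x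
                ((Finset.univ.filter fun t : Fin (k i) => (t : ℕ) < j)).val) ≤ V
             then (1:ℝ) else 0) = 1 := by
          intro x
          rw [if_pos]
          exact hleV _ (hpreLE i hi _ (hcardpre i j x))
        have h1 : ∫ x : Fin (k i) → NNReal,
            (if g (Multiset.map x
                ((Finset.univ.filter fun t : Fin (k i) => (t : ℕ) < j)).val) ≤ V
             then (1:ℝ) else 0) ∂(Measure.pi fun _ => P i)
            = ∫ _x : Fin (k i) → NNReal, (1:ℝ) ∂(Measure.pi fun _ => P i) := by
          congr 1
          funext x
          exact hone x
        rw [h1]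
        simp
        linarith
      have hms := main_step μ k X hXmeas P hlaw hg0 hgnn hmono hcont hedr.1 hIntu hIntr S hS
        hk1 y V (1/lam) (by linarith) hymin hpi
      rw [hyV] at hms
      have : (0:ℝ) ≤ (1 - 1/lam)⁻¹ * (D * r) := by positivity
      linarith
    · obtain ⟨v, hvmono, hvtend, hvmem⟩ := exists_seq_tendsto_sSup hSne hSbdd
      choose ys hys hysmin using fun nn => (hedr.2 (v nn) (hvmem nn).1)
      have hvle : ∀ nn, v nn ≤ V := fun nn => le_csSup hSbdd (hvmem nn)
      have hstep : ∀ ε : ℝ, 0 < ε → ε < 1 →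
          utility μ g X S ≤ V + (1-ε)⁻¹ * (D * r) := by
        intro ε hε0 hε1
        have hev : ∀ i ∈ S, ∀ j : ℕ, j < k i → ∀ᶠ nn in Filter.atTop,
            1 - ε ≤ ∫ x : Fin (k i) → NNReal,
              (if g (Multiset.map x
                  ((Finset.univ.filter fun t : Fin (k i) => (t : ℕ) < j)).val) ≤ v nn
               then (1:ℝ) else 0) ∂(Measure.pi fun _ => P i) := by
          intro i hi j _
          set π := (Measure.pi fun _ : Fin (k i) => P i) with hπ
          set G : (Fin (k i) → NNReal) → ℝ := fun x => g (Multiset.map x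
            ((Finset.univ.filter fun t : Fin (k i) => (t : ℕ) < j)).val) with hG
          have hGm : Measurable G := (finset_cont hcont _).measurable
          set E : ℕ → Set (Fin (k i) → NNReal) := fun nn => {x | G x ≤ v nn} with hE
          have hEm : ∀ nn, MeasurableSet (E nn) :=
            fun nn => measurableSet_le hGm measurable_const
          have hEmono : Monotone E := fun a b hab x hx => le_trans hx (hvmono hab)
          have hEunion : (⋃ nn, E nn) = Set.univ := by
            ext x
            simp only [Set.mem_iUnion, Set.mem_univ, iff_true]
            have hxA : G x ≤ A := hpreLE i hi _ (hcardpre i j x)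
            have hxV : G x ≤ V := hleV _ hxA
            have hxlt : G x < V := lt_of_le_of_ne hxV fun h => hVatt ⟨_, h⟩
            obtain ⟨nn, hnn⟩ := (hvtend.eventually (lt_mem_nhds hxlt)).exists
            exact ⟨nn, le_of_lt hnn⟩
          have htm : Filter.Tendsto (fun nn => π (E nn)) Filter.atTop (nhds 1) := by
            have h1 := tendsto_measure_iUnion_atTop (μ := π) hEmono
            rw [hEunion] at h1
            simpa [Function.comp_def] using h1
          have htoReal : Filter.Tendsto (fun nn => (π (E nn)).toReal) Filter.atTop
              (nhds 1) := by
            have h2 := (ENNReal.tendsto_toReal (by simp : (1:ENNReal) ≠ ⊤)).comp htm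
            simpa [Function.comp_def] using h2
          have hval : ∀ nn, ∫ x : Fin (k i) → NNReal,
              (if G x ≤ v nn then (1:ℝ) else 0) ∂π = (π (E nn)).toReal := by
            intro nn
            have h3 : (fun x => if G x ≤ v nn then (1:ℝ) else 0)
                = (E nn).indicator fun _ => (1:ℝ) := by
              funext x
              simp [hE, Set.indicator_apply, Set.mem_setOf_eq]
            rw [h3, integral_indicator_const (1:ℝ) (hEm nn)]
            simp [measureReal_def]
          have hfin := htoReal.eventually (eventually_ge_nhds (by linarith : 1 - ε < 1))
          filter_upwards [hfin] with nn hnn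
          rw [hval nn]
          exact hnn
        have hcomb : ∀ᶠ nn in Filter.atTop, ∀ i ∈ S, ∀ j ∈ Finset.range (k i),
            1 - ε ≤ ∫ x : Fin (k i) → NNReal,
              (if g (Multiset.map x
                  ((Finset.univ.filter fun t : Fin (k i) => (t : ℕ) < j)).val) ≤ v nn
               then (1:ℝ) else 0) ∂(Measure.pi fun _ => P i) := by
          rw [Filter.eventually_all_finset]
          intro i hi
          rw [Filter.eventually_all_finset]
          intro j hj
          exact hev i hi j (Finset.mem_range.mp hj)
        obtain ⟨nn, hnn⟩ := hcomb.exists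
        have hms := main_step μ k X hXmeas P hlaw hg0 hgnn hmono hcont hedr.1 hIntu hIntr S hS
          hk1 (ys nn) (v nn) ε (by linarith) (hysmin nn)
          (fun i hi j hj => hnn i hi j (Finset.mem_range.mpr hj))
        rw [hys nn] at hms
        have := hvle nn
        linarith
      have hfin : utility μ g X S ≤ V + D * r := by
        have htt : Filter.Tendsto (fun m : ℕ => V + (1 - ((m:ℝ)+2)⁻¹)⁻¹ * (D * r))
            Filter.atTop (nhds (V + (1 - 0)⁻¹ * (D * r))) := by
          refine Filter.Tendsto.add tendsto_const_nhds (Filter.Tendsto.mul ?_ tendsto_const_nhds)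
          refine Filter.Tendsto.inv₀ (Filter.Tendsto.sub tendsto_const_nhds ?_) (by norm_num)
          exact tendsto_inv_atTop_zero.comp
            (Filter.tendsto_atTop_add_const_right _ 2 tendsto_natCast_atTop_atTop)
        have hle : ∀ m : ℕ, utility μ g X S ≤ V + (1 - ((m:ℝ)+2)⁻¹)⁻¹ * (D * r) := by
          intro m
          refine hstep ((m:ℝ)+2)⁻¹ (by positivity) ?_
          have h1 : (1:ℝ) < (m:ℝ) + 2 := by
            have := Nat.cast_nonneg (α := ℝ) m
            linarith
          exact inv_lt_one_of_one_lt₀ h1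
        have h2 := ge_of_tendsto htt (Filter.Eventually.of_forall hle)
        simpa using h2
      have h3 : D * r ≤ (1 - 1/lam)⁻¹ * (D * r) := by
        nlinarith [mul_nonneg (sub_nonneg.mpr hco1) (mul_nonneg hD0 hr0)]
      linarith
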